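/- If r_1 ≥ r_2 ≥ r_3 ≥ r_4 > 0 and 1/r_1 + 1/r_2 ≥ 1/r_3 + 1/r_4 - 2/(r_3+r_4), then for every permutation (i,j,k,l) of (1,2,3,4): 1/r_i + 1/r_j ≥ 1/r_k + 1/r_l - 2/(r_k+r_l). -/
import Mathlib

private lemma aux_dec (c d x : ℝ) (hc : 0 < c) (hd : 0 < d) (hcx : c ≤ x) :
    2 / x - 2 / (x + d) ≤ 2 / c - 2 / (c + d) := by
  have hx : 0 < x := lt_of_lt_of_le hc hcx
  have h1 : 2 / x - 2 / (x + d) = 2 * d / (x * (x + d)) := by field_simp; ring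
  have h2 : 2 / c - 2 / (c + d) = 2 * d / (c * (c + d)) := by field_simp; ring
  rw [h1, h2]
  gcongr

private lemma key (a b c d : ℝ) (ha : 0 < a) (hb : 0 < b) (hc : 0 < c) (hd : 0 < d)
    (hba : b ≤ a) (hcb : c ≤ b) (hdc : d ≤ c)
    (h : 1 / c + 1 / d - 2 / (c + d) ≤ 1 / a + 1 / b) :
    (1 / a + 1 / b - 2 / (a + b) ≤ 1 / c + 1 / d) ∧
    (1 / a + 1 / c - 2 / (a + c) ≤ 1 / b + 1 / d) ∧
    (1 / b + 1 / d - 2 / (b + d) ≤ 1 / a + 1 / c) ∧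
    (1 / a + 1 / d - 2 / (a + d) ≤ 1 / b + 1 / c) ∧
    (1 / b + 1 / c - 2 / (b + c) ≤ 1 / a + 1 / d) := by
  have iab : 1 / a ≤ 1 / b := one_div_le_one_div_of_le hb hba
  have ibc : 1 / b ≤ 1 / c := one_div_le_one_div_of_le hc hcb
  have icd : 1 / c ≤ 1 / d := one_div_le_one_div_of_le hd hdc
  have iac : 1 / a ≤ 1 / c := iab.trans ibc
  have ibd : 1 / b ≤ 1 / d := ibc.trans icd
  have auxb := aux_dec c d b hc hd hcb
  have auxa := aux_dec c d a hc hd (hcb.trans hba)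
  have pab : 0 < 2 / (a + b) := by positivity
  have pac : 0 < 2 / (a + c) := by positivity
  have pa : 0 < 1 / a := by positivity
  have hbc1 : 2 / (b + b) ≤ 2 / (b + c) :=
    div_le_div_of_nonneg_left (by norm_num) (by positivity) (by linarith)
  have hbc2 : 2 / (b + b) = 1 / b := by
    rw [show b + b = 2 * b by ring]; field_simp
  refine ⟨by linarith, by linarith, ?_, ?_, ?_⟩
  · ring_nf at h auxb ⊢; linarith
  · ring_nf at h auxa ⊢; linarith
  · rw [hbc2] at hbc1; linarith

set_option maxHeartbeats 2000000 in
/-- Lemma 3.1: if `r 0 ≥ r 1 ≥ r 2 ≥ r 3 > 0` and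
`1/r₁ + 1/r₂ ≥ 1/r₃ + 1/r₄ - 2/(r₃+r₄)` holds for the identity ordering,
then the analogous inequality holds for every permutation of the indices. -/
theorem stmt_15 (r : Fin 4 → ℝ)
    (hpos : ∀ i, 0 < r i) (hmono : ∀ i j : Fin 4, i ≤ j → r j ≤ r i)
    (h : 1 / r 2 + 1 / r 3 - 2 / (r 2 + r 3) ≤ 1 / r 0 + 1 / r 1)
    (σ : Equiv.Perm (Fin 4)) :
    1 / r (σ 2) + 1 / r (σ 3) - 2 / (r (σ 2) + r (σ 3)) ≤
      1 / r (σ 0) + 1 / r (σ 1) := by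
  obtain ⟨F2, F3, F4, F5, F6⟩ :=
    key (r 0) (r 1) (r 2) (r 3) (hpos 0) (hpos 1) (hpos 2) (hpos 3)
      (hmono 0 1 (by decide)) (hmono 1 2 (by decide)) (hmono 2 3 (by decide)) h
  clear hpos hmono
  ring_nf at h F2 F3 F4 F5 F6
  have inj := σ.injective
  have d01 : σ 0 ≠ σ 1 := fun hh => absurd (inj hh) (by decide)
  have d02 : σ 0 ≠ σ 2 := fun hh => absurd (inj hh) (by decide)
  have d03 : σ 0 ≠ σ 3 := fun hh => absurd (inj hh) (by decide)
  have d12 : σ 1 ≠ σ 2 := fun hh => absurd (inj hh) (by decide)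
  have d13 : σ 1 ≠ σ 3 := fun hh => absurd (inj hh) (by decide)
  have d23 : σ 2 ≠ σ 3 := fun hh => absurd (inj hh) (by decide)
  have e01 : (r 0 + r 1)⁻¹ = (r 1 + r 0)⁻¹ := by rw [add_comm]
  have e02 : (r 0 + r 2)⁻¹ = (r 2 + r 0)⁻¹ := by rw [add_comm]
  have e03 : (r 0 + r 3)⁻¹ = (r 3 + r 0)⁻¹ := by rw [add_comm]
  have e12 : (r 1 + r 2)⁻¹ = (r 2 + r 1)⁻¹ := by rw [add_comm]
  have e13 : (r 1 + r 3)⁻¹ = (r 3 + r 1)⁻¹ := by rw [add_comm]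
  have e23 : (r 2 + r 3)⁻¹ = (r 3 + r 2)⁻¹ := by rw [add_comm]
  have e : ∀ i : Fin 4, σ i = 0 ∨ σ i = 1 ∨ σ i = 2 ∨ σ i = 3 := fun i => by omega
  rcases e 0 with h0|h0|h0|h0 <;> rcases e 1 with h1|h1|h1|h1 <;>
    rcases e 2 with h2|h2|h2|h2 <;> rcases e 3 with h3|h3|h3|h3 <;>
    first
      | exact absurd (h0.trans h1.symm) d01
      | exact absurd (h0.trans h2.symm) d02
      | exact absurd (h0.trans h3.symm) d03
      | exact absurd (h1.trans h2.symm) d12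
      | exact absurd (h1.trans h3.symm) d13
      | exact absurd (h2.trans h3.symm) d23
      | (rw [h0, h1, h2, h3]; ring_nf; linarith)
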